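/- Shrinkage factor for moderate signals (Proposition 1(b), known-variance form). Fix ε > 0 with ε < a/2. There exist constants γ > 0 and C > 0, depending only on σ, b and ε, such that for every integer p ≥ 2, every τ > 0, and every d ∈ ℝ with |d| ≤ (a/2 − ε)·√(τ (log p)/2), the random variable X ~ N(d, στ) satisfies E[q(X)] ≤ C·p^{−γ}. -/

import Mathlib

set_option maxHeartbeats 1000000


open MeasureTheory ProbabilityTheory

/-- The constant `a = (2+b)√σ + √((2+b)²σ + 4)` from Proposition 1. -/
noncomputable def shrinkA (σ b : ℝ) : ℝ :=
  (2 + b) * Real.sqrt σ + Real.sqrt ((2 + b) ^ 2 * σ + 4)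

/-- The shrinkage factor `q(x) = g₁(|x|)/(g₀(|x|) + g₁(|x|))`, where `g₀` is the density of
`N(0, τ)` and `g₁` is the density of `N(a·√(τ log p / 2), τ)`. -/
noncomputable def shrinkQ (σ b : ℝ) (p : ℕ) (τ : ℝ) (x : ℝ) : ℝ :=
  gaussianPDFReal (shrinkA σ b * Real.sqrt (τ * Real.log p / 2)) τ.toNNReal |x| /
    (gaussianPDFReal 0 τ.toNNReal |x| +
      gaussianPDFReal (shrinkA σ b * Real.sqrt (τ * Real.log p / 2)) τ.toNNReal |x|)


lemma gauss_pdf_cmp (d v r x : ℝ) (hv : 0 < v) (h1 : r ^ 2 ≤ (x - d) ^ 2) :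
    gaussianPDFReal d v.toNNReal x ≤
      Real.exp (-r ^ 2 / (4 * v)) * (Real.sqrt 2 * gaussianPDFReal d (2 * v).toNNReal x) := by
  have hvc : ((v.toNNReal) : ℝ) = v := Real.coe_toNNReal _ hv.le
  have h2v : (0:ℝ) < 2 * v := by linarith
  have h2v' : (((2 * v).toNNReal) : ℝ) = 2 * v := Real.coe_toNNReal _ h2v.le
  have e1 : gaussianPDFReal d v.toNNReal x
      = (Real.sqrt (2 * Real.pi * v))⁻¹ * Real.exp (-(x - d) ^ 2 / (2 * v)) := by
    simp only [gaussianPDFReal, hvc]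
  have e2 : gaussianPDFReal d (2 * v).toNNReal x
      = (Real.sqrt (2 * Real.pi * (2 * v)))⁻¹ * Real.exp (-(x - d) ^ 2 / (2 * (2 * v))) := by
    simp only [gaussianPDFReal, h2v']
  rw [e1, e2]
  have hs2 : Real.sqrt 2 ≠ 0 := by positivity
  have hconst : Real.sqrt 2 * (Real.sqrt (2 * Real.pi * (2 * v)))⁻¹
      = (Real.sqrt (2 * Real.pi * v))⁻¹ := by
    rw [show 2 * Real.pi * (2 * v) = 2 * (2 * Real.pi * v) by ring,
      Real.sqrt_mul (by norm_num : (0:ℝ) ≤ 2), mul_inv, ← mul_assoc,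
      mul_inv_cancel₀ hs2, one_mul]
  have key : Real.exp (-(x - d) ^ 2 / (2 * v)) ≤
      Real.exp (-r ^ 2 / (4 * v)) * Real.exp (-(x - d) ^ 2 / (2 * (2 * v))) := by
    rw [← Real.exp_add]
    apply Real.exp_le_exp.mpr
    have h4v : (0:ℝ) < 4 * v := by linarith
    have hid : -r ^ 2 / (4 * v) + -(x - d) ^ 2 / (2 * (2 * v)) - -(x - d) ^ 2 / (2 * v)
        = ((x - d) ^ 2 - r ^ 2) / (4 * v) := by
      field_simp
      ring
    have h5 : 0 ≤ ((x - d) ^ 2 - r ^ 2) / (4 * v) :=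
      div_nonneg (by linarith) h4v.le
    linarith
  calc (Real.sqrt (2 * Real.pi * v))⁻¹ * Real.exp (-(x - d) ^ 2 / (2 * v))
      ≤ (Real.sqrt (2 * Real.pi * v))⁻¹ *
          (Real.exp (-r ^ 2 / (4 * v)) * Real.exp (-(x - d) ^ 2 / (2 * (2 * v)))) :=
        mul_le_mul_of_nonneg_left key (inv_nonneg.mpr (Real.sqrt_nonneg _))
    _ = Real.exp (-r ^ 2 / (4 * v)) * (Real.sqrt 2 *
          ((Real.sqrt (2 * Real.pi * (2 * v)))⁻¹ * Real.exp (-(x - d) ^ 2 / (2 * (2 * v))))) := by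
        rw [← mul_assoc (Real.sqrt 2), hconst]
        ring

lemma gauss_set_tail (d v r : ℝ) (hv : 0 < v) (s : Set ℝ) (hs : MeasurableSet s)
    (hbd : ∀ x ∈ s, r ^ 2 ≤ (x - d) ^ 2) :
    ((gaussianReal d v.toNNReal) s).toReal ≤ Real.sqrt 2 * Real.exp (-r ^ 2 / (4 * v)) := by
  have hv' : v.toNNReal ≠ 0 := by
    simp only [ne_eq, Real.toNNReal_eq_zero, not_le]
    exact hv
  have h2v : (0:ℝ) < 2 * v := by linarith
  have h2vne : (2 * v).toNNReal ≠ 0 := by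
    simp only [ne_eq, Real.toNNReal_eq_zero, not_le]
    exact h2v
  rw [gaussianReal_apply_eq_integral _ hv' s,
    ENNReal.toReal_ofReal (integral_nonneg (fun _ => gaussianPDFReal_nonneg _ _ _))]
  calc ∫ x in s, gaussianPDFReal d v.toNNReal x
      ≤ ∫ x in s, Real.exp (-r ^ 2 / (4 * v)) *
          (Real.sqrt 2 * gaussianPDFReal d (2 * v).toNNReal x) :=
        setIntegral_mono_on (integrable_gaussianPDFReal d v.toNNReal).integrableOn
          (((integrable_gaussianPDFReal d (2 * v).toNNReal).const_mul
            (Real.sqrt 2)).const_mul _).integrableOn hs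
          (fun x hx => gauss_pdf_cmp d v r x hv (hbd x hx))
    _ = Real.exp (-r ^ 2 / (4 * v)) * Real.sqrt 2 *
          ∫ x in s, gaussianPDFReal d (2 * v).toNNReal x := by
        rw [integral_const_mul, integral_const_mul, mul_assoc]
    _ ≤ Real.exp (-r ^ 2 / (4 * v)) * Real.sqrt 2 * 1 := by
        apply mul_le_mul_of_nonneg_left _ (by positivity)
        rw [← integral_gaussianPDFReal_eq_one d h2vne]
        exact setIntegral_le_integral (integrable_gaussianPDFReal _ _)
          (ae_of_all _ fun x => gaussianPDFReal_nonneg _ _ _)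
    _ = Real.sqrt 2 * Real.exp (-r ^ 2 / (4 * v)) := by ring

/-- **Shrinkage factor for moderate signals** (Proposition 1(b), known-variance form).
For `0 < ε < a/2` there are constants `γ, C > 0` depending only on `σ, b, ε` such that for all
`p ≥ 2`, `τ > 0` and `|d| ≤ (a/2 − ε)·√(τ log p / 2)`, if `X ~ N(d, στ)` then
`E[q(X)] ≤ C·p^{−γ}`. -/
theorem moderate_signal_shrinkage (σ b ε : ℝ) (hσ : 0 < σ) (hb : 0 < b) (hε : 0 < ε)
    (hεa : ε < shrinkA σ b / 2) :
    ∃ γ > (0 : ℝ), ∃ C > (0 : ℝ), ∀ p : ℕ, 2 ≤ p → ∀ τ : ℝ, 0 < τ → ∀ d : ℝ,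
      |d| ≤ (shrinkA σ b / 2 - ε) * Real.sqrt (τ * Real.log p / 2) →
      ∫ x, shrinkQ σ b p τ x ∂(gaussianReal d (σ * τ).toNNReal) ≤ C * (p : ℝ) ^ (-γ) := by
  set a := shrinkA σ b with ha_def
  have ha : 0 < a := by linarith
  set γ1 : ℝ := a * ε / 4 with hγ1_def
  set γ2 : ℝ := ε ^ 2 / (32 * σ) with hγ2_def
  have hγ1 : 0 < γ1 := by positivity
  have hγ2 : 0 < γ2 := by positivity
  refine ⟨min γ1 γ2, lt_min hγ1 hγ2, Real.sqrt 2 + 1, by positivity, ?_⟩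
  intro p hp τ hτ d hd
  have hp0 : (0:ℝ) < p := by positivity
  have hp1 : (1:ℝ) < p := by exact_mod_cast lt_of_lt_of_le one_lt_two hp
  have hL : 0 < Real.log p := Real.log_pos hp1
  set L := Real.log p with hL_def
  set s := Real.sqrt (τ * L / 2) with hs_def
  have hs0 : 0 < s := Real.sqrt_pos.mpr (by positivity)
  have hs2 : s ^ 2 = τ * L / 2 := Real.sq_sqrt (by positivity)
  set t := (a / 2 - ε / 2) * s with ht_def
  set r := ε / 2 * s with hr_def
  have hr0 : 0 < r := by positivity
  have hτc : ((τ.toNNReal) : ℝ) = τ := Real.coe_toNNReal _ hτ.le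
  have hτne : τ.toNNReal ≠ 0 := by
    simp only [ne_eq, Real.toNNReal_eq_zero, not_le]; exact hτ
  have hστ : 0 < σ * τ := by positivity
  set μ := gaussianReal d (σ * τ).toNNReal with hμ_def
  -- pointwise bounds on shrinkQ
  have hQ : ∀ x : ℝ, shrinkQ σ b p τ x = gaussianPDFReal (a * s) τ.toNNReal |x| /
      (gaussianPDFReal 0 τ.toNNReal |x| + gaussianPDFReal (a * s) τ.toNNReal |x|) :=
    fun x => rfl
  have hq0 : ∀ x, 0 ≤ shrinkQ σ b p τ x := by
    intro x
    rw [hQ x]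
    have h0 := gaussianPDFReal_pos 0 τ.toNNReal |x| hτne
    have h1 := gaussianPDFReal_pos (a * s) τ.toNNReal |x| hτne
    positivity
  have hqle1 : ∀ x, shrinkQ σ b p τ x ≤ 1 := by
    intro x
    rw [hQ x]
    have h0 := gaussianPDFReal_pos 0 τ.toNNReal |x| hτne
    have h1 := gaussianPDFReal_pos (a * s) τ.toNNReal |x| hτne
    rw [div_le_one (by linarith)]
    linarith
  have hqsmall : ∀ x : ℝ, |x| ≤ t → shrinkQ σ b p τ x ≤ (p:ℝ) ^ (-γ1) := by
    intro x hx
    have h0 := gaussianPDFReal_pos 0 τ.toNNReal |x| hτne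
    have h1 := gaussianPDFReal_pos (a * s) τ.toNNReal |x| hτne
    have step1 : shrinkQ σ b p τ x ≤
        gaussianPDFReal (a * s) τ.toNNReal |x| / gaussianPDFReal 0 τ.toNNReal |x| := by
      rw [hQ x]
      gcongr
      linarith
    refine step1.trans ?_
    have e1 : gaussianPDFReal (a * s) τ.toNNReal |x|
        = (Real.sqrt (2 * Real.pi * τ))⁻¹ * Real.exp (-(|x| - a * s) ^ 2 / (2 * τ)) := by
      simp only [gaussianPDFReal, hτc]
    have e0 : gaussianPDFReal 0 τ.toNNReal |x|
        = (Real.sqrt (2 * Real.pi * τ))⁻¹ * Real.exp (-(|x| - 0) ^ 2 / (2 * τ)) := by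
      simp only [gaussianPDFReal, hτc]
    rw [e1, e0, mul_div_mul_left _ _ (by positivity : (Real.sqrt (2 * Real.pi * τ))⁻¹ ≠ 0),
      ← Real.exp_sub, Real.rpow_def_of_pos hp0]
    apply Real.exp_le_exp.mpr
    rw [div_sub_div_same, div_le_iff₀ (by linarith : (0:ℝ) < 2 * τ)]
    have hy0 : 0 ≤ |x| := abs_nonneg x
    have hkey : 2 * (a * s) * |x| ≤ 2 * (a * s) * ((a / 2 - ε / 2) * s) :=
      mul_le_mul_of_nonneg_left hx (by positivity)
    nlinarith [hs2, hkey]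
  -- the dominating function
  set S : Set ℝ := {y : ℝ | t < |y|} with hS_def
  have hS : MeasurableSet S := measurableSet_lt measurable_const measurable_abs
  have hmono : ∀ x, shrinkQ σ b p τ x ≤ S.indicator (fun _ => (1:ℝ)) x + (p:ℝ) ^ (-γ1) := by
    intro x
    by_cases hx : x ∈ S
    · rw [Set.indicator_of_mem hx]
      have h2 : (0:ℝ) ≤ (p:ℝ) ^ (-γ1) := Real.rpow_nonneg hp0.le _
      linarith [hqle1 x]
    · rw [Set.indicator_of_notMem hx]
      have hx' : |x| ≤ t := by
        simpa [hS_def, not_lt] using hx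
      linarith [hqsmall x hx']
  have hInt : Integrable (fun x => S.indicator (fun _ => (1:ℝ)) x + (p:ℝ) ^ (-γ1)) μ :=
    ((integrable_const (1:ℝ)).indicator hS).add (integrable_const _)
  have hstep : ∫ x, shrinkQ σ b p τ x ∂μ ≤ (μ S).toReal + (p:ℝ) ^ (-γ1) := by
    calc ∫ x, shrinkQ σ b p τ x ∂μ
        ≤ ∫ x, (S.indicator (fun _ => (1:ℝ)) x + (p:ℝ) ^ (-γ1)) ∂μ :=
          integral_mono_of_nonneg (ae_of_all _ hq0) hInt (ae_of_all _ hmono)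
      _ = (μ S).toReal + (p:ℝ) ^ (-γ1) := by
          rw [integral_add ((integrable_const (1:ℝ)).indicator hS) (integrable_const _),
            integral_indicator_const _ hS, integral_const, probReal_univ, measureReal_def,
            smul_eq_mul, smul_eq_mul, mul_one, one_mul]
  -- tail bound
  have hbd : ∀ x ∈ S, r ^ 2 ≤ (x - d) ^ 2 := by
    intro x hx
    have hx' : t < |x| := hx
    have h2 : |x| - |d| ≤ |x - d| := abs_sub_abs_le_abs_sub x d
    have h3 : r ≤ |x - d| := by
      have : |d| ≤ (a / 2 - ε) * s := hd
      nlinarith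
    calc r ^ 2 ≤ |x - d| ^ 2 := by nlinarith
      _ = (x - d) ^ 2 := sq_abs _
  have htail : (μ S).toReal ≤ Real.sqrt 2 * Real.exp (-r ^ 2 / (4 * (σ * τ))) :=
    gauss_set_tail d (σ * τ) r hστ S hS hbd
  have hexp2 : Real.exp (-r ^ 2 / (4 * (σ * τ))) = (p:ℝ) ^ (-γ2) := by
    rw [Real.rpow_def_of_pos hp0]
    congr 1
    have hr2 : r ^ 2 = ε ^ 2 * (τ * L) / 8 := by
      rw [hr_def, mul_pow, hs2]; ring
    rw [hr2, hγ2_def]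
    have hσ' : σ ≠ 0 := hσ.ne'
    have hτ' : τ ≠ 0 := hτ.ne'
    field_simp
    ring
  have hγle1 : (p:ℝ) ^ (-γ1) ≤ (p:ℝ) ^ (-(min γ1 γ2)) :=
    Real.rpow_le_rpow_of_exponent_le hp1.le (by simp [min_le_left])
  have hγle2 : (p:ℝ) ^ (-γ2) ≤ (p:ℝ) ^ (-(min γ1 γ2)) :=
    Real.rpow_le_rpow_of_exponent_le hp1.le (by simp [min_le_right])
  calc ∫ x, shrinkQ σ b p τ x ∂μ ≤ (μ S).toReal + (p:ℝ) ^ (-γ1) := hstep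
    _ ≤ Real.sqrt 2 * (p:ℝ) ^ (-γ2) + (p:ℝ) ^ (-γ1) := by
        rw [← hexp2]; linarith
    _ ≤ Real.sqrt 2 * (p:ℝ) ^ (-(min γ1 γ2)) + (p:ℝ) ^ (-(min γ1 γ2)) := by
        have h2 : (0:ℝ) ≤ Real.sqrt 2 := Real.sqrt_nonneg _
        nlinarith
    _ = (Real.sqrt 2 + 1) * (p:ℝ) ^ (-(min γ1 γ2)) := by ring
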